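/- Let V be a nonempty finite set and let P be a set of unordered pairs of distinct half-edges (a half-edge is a pair (v,i) with v ∈ V and i ∈ {1,2,3}) such that each half-edge belongs to at most one pair of P, and such that the graph on vertex set V with one edge {v,w} for each pair {(v,i),(w,j)} ∈ P is a tree (connected with |P| = |V| − 1; in particular v ≠ w in each pair). Let M be the additive monoid of all functions f : V → ℤ¹⁰, f(v) = (x_v, L_v), such that: (i) f(v) ∈ C ∩ ℤ¹⁰ for every v; (ii) all level coordinates L_v are equal to a common value L(f); (iii) for every pair {(v,i),(w,j)} ∈ P, ∂ᵢ(x_v) = σ(∂ⱼ(x_w)), where σ(p,q) = (q,p). Then every f ∈ M is a sum of L(f) elements of M each having common level 1. -/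

import Mathlib

/-- The nine generators `g_X, g_S, g_T, g₁₂, g₂₃, g₃₁, g₂₁, g₃₂, g₁₃` of the
trinode cone in `ℤ¹⁰ = ℤ⁹ × ℤ` (first nine coordinates ordered
`(a₁,b₁,c₁,a₂,a₃,b₂,b₃,c₂,c₃)`, last coordinate the level). -/
def cbGens : Fin 9 → Fin 10 → ℤ :=
  ![![0, 0, 0, 0, 0, 0, 0, 0, 0, 1],  -- g_X
    ![0, 0, 0, 1, 0, 1, 0, 1, 0, 1],  -- g_S
    ![0, 0, 0, 0, 1, 0, 1, 0, 1, 1],  -- g_T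
    ![0, 0, 0, 1, 0, 0, 1, 0, 0, 1],  -- g₁₂
    ![0, 0, 0, 0, 0, 1, 0, 0, 1, 1],  -- g₂₃
    ![0, 0, 0, 0, 1, 0, 0, 1, 0, 1],  -- g₃₁
    ![0, 1, 0, 0, 0, 0, 0, 0, 0, 1],  -- g₂₁
    ![0, 0, 1, 0, 0, 0, 0, 0, 0, 1],  -- g₃₂
    ![1, 0, 0, 0, 0, 0, 0, 0, 0, 1]]  -- g₁₃

/-- The real versions of the nine generators. -/
noncomputable def cbGensR (i : Fin 9) : Fin 10 → ℝ := fun t => (cbGens i t : ℝ)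

/-- The polyhedral cone `C ⊆ ℝ¹⁰` generated by the nine vectors. -/
def coneC : Set (Fin 10 → ℝ) :=
  {y | ∃ c : Fin 9 → ℝ, (∀ i, 0 ≤ c i) ∧ y = ∑ i : Fin 9, c i • cbGensR i}

/-- The boundary map applied to the `ℤ⁹`-part of a point of `ℤ¹⁰`:
`∂(x) = ((a₁+a₂, a₃+b₁), (b₁+b₂, b₃+c₁), (c₁+c₂, c₃+a₁))`. -/
def bd10 (y : Fin 10 → ℤ) : Fin 3 → ℤ × ℤ :=
  ![(y 0 + y 3, y 4 + y 1), (y 1 + y 5, y 6 + y 2), (y 2 + y 7, y 8 + y 0)]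

/-- The swap `σ(p, q) = (q, p)`. -/
def sw (p : ℤ × ℤ) : ℤ × ℤ := (p.2, p.1)

def bdg (i : Fin 3) (r : Fin 9) : ℤ × ℤ := bd10 (cbGens r) i

def cnt (i : Fin 3) (τ : ℤ × ℤ) (n : Fin 9 → ℤ) : ℤ :=
  ∑ r, if bdg i r = τ then n r else 0

lemma sum9 {M : Type*} [AddCommMonoid M] (f : Fin 9 → M) :
    ∑ r, f r = f 0 + f 1 + f 2 + f 3 + f 4 + f 5 + f 6 + f 7 + f 8 := by
  simp only [Fin.sum_univ_succ, Finset.univ_unique, Finset.sum_singleton, add_assoc]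
  rfl
lemma gsumZ0 (n : Fin 9 → ℤ) : ∑ r, n r * cbGens r (0:Fin 10) = n 8 := by
  rw [sum9 (fun r => n r * cbGens r (0:Fin 10))]
  simp only [show cbGens 0 (0:Fin 10) = 0 from rfl, show cbGens 1 (0:Fin 10) = 0 from rfl, show cbGens 2 (0:Fin 10) = 0 from rfl, show cbGens 3 (0:Fin 10) = 0 from rfl, show cbGens 4 (0:Fin 10) = 0 from rfl, show cbGens 5 (0:Fin 10) = 0 from rfl, show cbGens 6 (0:Fin 10) = 0 from rfl, show cbGens 7 (0:Fin 10) = 0 from rfl, show cbGens 8 (0:Fin 10) = 1 from rfl]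
  ring

lemma gsumR0 (n : Fin 9 → ℝ) : ∑ r, n r * cbGensR r (0:Fin 10) = n 8 := by
  rw [sum9 (fun r => n r * cbGensR r (0:Fin 10))]
  simp only [show cbGensR 0 (0:Fin 10) = 0 from by norm_num [cbGensR, show cbGens 0 (0:Fin 10) = 0 from rfl], show cbGensR 1 (0:Fin 10) = 0 from by norm_num [cbGensR, show cbGens 1 (0:Fin 10) = 0 from rfl], show cbGensR 2 (0:Fin 10) = 0 from by norm_num [cbGensR, show cbGens 2 (0:Fin 10) = 0 from rfl], show cbGensR 3 (0:Fin 10) = 0 from by norm_num [cbGensR, show cbGens 3 (0:Fin 10) = 0 from rfl], show cbGensR 4 (0:Fin 10) = 0 from by norm_num [cbGensR, show cbGens 4 (0:Fin 10) = 0 from rfl], show cbGensR 5 (0:Fin 10) = 0 from by norm_num [cbGensR, show cbGens 5 (0:Fin 10) = 0 from rfl], show cbGensR 6 (0:Fin 10) = 0 from by norm_num [cbGensR, show cbGens 6 (0:Fin 10) = 0 from rfl], show cbGensR 7 (0:Fin 10) = 0 from by norm_num [cbGensR, show cbGens 7 (0:Fin 10) = 0 from rfl], show cbGensR 8 (0:Fin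 10) = 1 from by norm_num [cbGensR, show cbGens 8 (0:Fin 10) = 1 from rfl]]
  ring

lemma gsumZ1 (n : Fin 9 → ℤ) : ∑ r, n r * cbGens r (1:Fin 10) = n 6 := by
  rw [sum9 (fun r => n r * cbGens r (1:Fin 10))]
  simp only [show cbGens 0 (1:Fin 10) = 0 from rfl, show cbGens 1 (1:Fin 10) = 0 from rfl, show cbGens 2 (1:Fin 10) = 0 from rfl, show cbGens 3 (1:Fin 10) = 0 from rfl, show cbGens 4 (1:Fin 10) = 0 from rfl, show cbGens 5 (1:Fin 10) = 0 from rfl, show cbGens 6 (1:Fin 10) = 1 from rfl, show cbGens 7 (1:Fin 10) = 0 from rfl, show cbGens 8 (1:Fin 10) = 0 from rfl]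
  ring

lemma gsumR1 (n : Fin 9 → ℝ) : ∑ r, n r * cbGensR r (1:Fin 10) = n 6 := by
  rw [sum9 (fun r => n r * cbGensR r (1:Fin 10))]
  simp only [show cbGensR 0 (1:Fin 10) = 0 from by norm_num [cbGensR, show cbGens 0 (1:Fin 10) = 0 from rfl], show cbGensR 1 (1:Fin 10) = 0 from by norm_num [cbGensR, show cbGens 1 (1:Fin 10) = 0 from rfl], show cbGensR 2 (1:Fin 10) = 0 from by norm_num [cbGensR, show cbGens 2 (1:Fin 10) = 0 from rfl], show cbGensR 3 (1:Fin 10) = 0 from by norm_num [cbGensR, show cbGens 3 (1:Fin 10) = 0 from rfl], show cbGensR 4 (1:Fin 10) = 0 from by norm_num [cbGensR, show cbGens 4 (1:Fin 10) = 0 from rfl], show cbGensR 5 (1:Fin 10) = 0 from by norm_num [cbGensR, show cbGens 5 (1:Fin 10) = 0 from rfl], show cbGensR 6 (1:Fin 10) = 1 from by norm_num [cbGensR, show cbGens 6 (1:Fin 10) = 1 from rfl], show cbGensR 7 (1:Fin 10) = 0 from by norm_num [cbGensR, show cbGens 7 (1:Fin 10) = 0 from rfl], show cbGensR 8 (1:Fin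 10) = 0 from by norm_num [cbGensR, show cbGens 8 (1:Fin 10) = 0 from rfl]]
  ring

lemma gsumZ2 (n : Fin 9 → ℤ) : ∑ r, n r * cbGens r (2:Fin 10) = n 7 := by
  rw [sum9 (fun r => n r * cbGens r (2:Fin 10))]
  simp only [show cbGens 0 (2:Fin 10) = 0 from rfl, show cbGens 1 (2:Fin 10) = 0 from rfl, show cbGens 2 (2:Fin 10) = 0 from rfl, show cbGens 3 (2:Fin 10) = 0 from rfl, show cbGens 4 (2:Fin 10) = 0 from rfl, show cbGens 5 (2:Fin 10) = 0 from rfl, show cbGens 6 (2:Fin 10) = 0 from rfl, show cbGens 7 (2:Fin 10) = 1 from rfl, show cbGens 8 (2:Fin 10) = 0 from rfl]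
  ring

lemma gsumR2 (n : Fin 9 → ℝ) : ∑ r, n r * cbGensR r (2:Fin 10) = n 7 := by
  rw [sum9 (fun r => n r * cbGensR r (2:Fin 10))]
  simp only [show cbGensR 0 (2:Fin 10) = 0 from by norm_num [cbGensR, show cbGens 0 (2:Fin 10) = 0 from rfl], show cbGensR 1 (2:Fin 10) = 0 from by norm_num [cbGensR, show cbGens 1 (2:Fin 10) = 0 from rfl], show cbGensR 2 (2:Fin 10) = 0 from by norm_num [cbGensR, show cbGens 2 (2:Fin 10) = 0 from rfl], show cbGensR 3 (2:Fin 10) = 0 from by norm_num [cbGensR, show cbGens 3 (2:Fin 10) = 0 from rfl], show cbGensR 4 (2:Fin 10) = 0 from by norm_num [cbGensR, show cbGens 4 (2:Fin 10) = 0 from rfl], show cbGensR 5 (2:Fin 10) = 0 from by norm_num [cbGensR, show cbGens 5 (2:Fin 10) = 0 from rfl], show cbGensR 6 (2:Fin 10) = 0 from by norm_num [cbGensR, show cbGens 6 (2:Fin 10) = 0 from rfl], show cbGensR 7 (2:Fin 10) = 1 from by norm_num [cbGensR, show cbGens 7 (2:Fin 10) = 1 from rfl], show cbGensR 8 (2:Fin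 10) = 0 from by norm_num [cbGensR, show cbGens 8 (2:Fin 10) = 0 from rfl]]
  ring

lemma gsumZ3 (n : Fin 9 → ℤ) : ∑ r, n r * cbGens r (3:Fin 10) = n 1 + n 3 := by
  rw [sum9 (fun r => n r * cbGens r (3:Fin 10))]
  simp only [show cbGens 0 (3:Fin 10) = 0 from rfl, show cbGens 1 (3:Fin 10) = 1 from rfl, show cbGens 2 (3:Fin 10) = 0 from rfl, show cbGens 3 (3:Fin 10) = 1 from rfl, show cbGens 4 (3:Fin 10) = 0 from rfl, show cbGens 5 (3:Fin 10) = 0 from rfl, show cbGens 6 (3:Fin 10) = 0 from rfl, show cbGens 7 (3:Fin 10) = 0 from rfl, show cbGens 8 (3:Fin 10) = 0 from rfl]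
  ring

lemma gsumR3 (n : Fin 9 → ℝ) : ∑ r, n r * cbGensR r (3:Fin 10) = n 1 + n 3 := by
  rw [sum9 (fun r => n r * cbGensR r (3:Fin 10))]
  simp only [show cbGensR 0 (3:Fin 10) = 0 from by norm_num [cbGensR, show cbGens 0 (3:Fin 10) = 0 from rfl], show cbGensR 1 (3:Fin 10) = 1 from by norm_num [cbGensR, show cbGens 1 (3:Fin 10) = 1 from rfl], show cbGensR 2 (3:Fin 10) = 0 from by norm_num [cbGensR, show cbGens 2 (3:Fin 10) = 0 from rfl], show cbGensR 3 (3:Fin 10) = 1 from by norm_num [cbGensR, show cbGens 3 (3:Fin 10) = 1 from rfl], show cbGensR 4 (3:Fin 10) = 0 from by norm_num [cbGensR, show cbGens 4 (3:Fin 10) = 0 from rfl], show cbGensR 5 (3:Fin 10) = 0 from by norm_num [cbGensR, show cbGens 5 (3:Fin 10) = 0 from rfl], show cbGensR 6 (3:Fin 10) = 0 from by norm_num [cbGensR, show cbGens 6 (3:Fin 10) = 0 from rfl], show cbGensR 7 (3:Fin 10) = 0 from by norm_num [cbGensR, show cbGens 7 (3:Fin 10) = 0 from rfl], show cbGensR 8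 (3:Fin 10) = 0 from by norm_num [cbGensR, show cbGens 8 (3:Fin 10) = 0 from rfl]]
  ring

lemma gsumZ4 (n : Fin 9 → ℤ) : ∑ r, n r * cbGens r (4:Fin 10) = n 2 + n 5 := by
  rw [sum9 (fun r => n r * cbGens r (4:Fin 10))]
  simp only [show cbGens 0 (4:Fin 10) = 0 from rfl, show cbGens 1 (4:Fin 10) = 0 from rfl, show cbGens 2 (4:Fin 10) = 1 from rfl, show cbGens 3 (4:Fin 10) = 0 from rfl, show cbGens 4 (4:Fin 10) = 0 from rfl, show cbGens 5 (4:Fin 10) = 1 from rfl, show cbGens 6 (4:Fin 10) = 0 from rfl, show cbGens 7 (4:Fin 10) = 0 from rfl, show cbGens 8 (4:Fin 10) = 0 from rfl]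
  ring

lemma gsumR4 (n : Fin 9 → ℝ) : ∑ r, n r * cbGensR r (4:Fin 10) = n 2 + n 5 := by
  rw [sum9 (fun r => n r * cbGensR r (4:Fin 10))]
  simp only [show cbGensR 0 (4:Fin 10) = 0 from by norm_num [cbGensR, show cbGens 0 (4:Fin 10) = 0 from rfl], show cbGensR 1 (4:Fin 10) = 0 from by norm_num [cbGensR, show cbGens 1 (4:Fin 10) = 0 from rfl], show cbGensR 2 (4:Fin 10) = 1 from by norm_num [cbGensR, show cbGens 2 (4:Fin 10) = 1 from rfl], show cbGensR 3 (4:Fin 10) = 0 from by norm_num [cbGensR, show cbGens 3 (4:Fin 10) = 0 from rfl], show cbGensR 4 (4:Fin 10) = 0 from by norm_num [cbGensR, show cbGens 4 (4:Fin 10) = 0 from rfl], show cbGensR 5 (4:Fin 10) = 1 from by norm_num [cbGensR, show cbGens 5 (4:Fin 10) = 1 from rfl], show cbGensR 6 (4:Fin 10) = 0 from by norm_num [cbGensR, show cbGens 6 (4:Fin 10) = 0 from rfl], show cbGensR 7 (4:Fin 10) = 0 from by norm_num [cbGensR, show cbGens 7 (4:Fin 10) = 0 from rfl], show cbGensR 8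 (4:Fin 10) = 0 from by norm_num [cbGensR, show cbGens 8 (4:Fin 10) = 0 from rfl]]
  ring

lemma gsumZ5 (n : Fin 9 → ℤ) : ∑ r, n r * cbGens r (5:Fin 10) = n 1 + n 4 := by
  rw [sum9 (fun r => n r * cbGens r (5:Fin 10))]
  simp only [show cbGens 0 (5:Fin 10) = 0 from rfl, show cbGens 1 (5:Fin 10) = 1 from rfl, show cbGens 2 (5:Fin 10) = 0 from rfl, show cbGens 3 (5:Fin 10) = 0 from rfl, show cbGens 4 (5:Fin 10) = 1 from rfl, show cbGens 5 (5:Fin 10) = 0 from rfl, show cbGens 6 (5:Fin 10) = 0 from rfl, show cbGens 7 (5:Fin 10) = 0 from rfl, show cbGens 8 (5:Fin 10) = 0 from rfl]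
  ring

lemma gsumR5 (n : Fin 9 → ℝ) : ∑ r, n r * cbGensR r (5:Fin 10) = n 1 + n 4 := by
  rw [sum9 (fun r => n r * cbGensR r (5:Fin 10))]
  simp only [show cbGensR 0 (5:Fin 10) = 0 from by norm_num [cbGensR, show cbGens 0 (5:Fin 10) = 0 from rfl], show cbGensR 1 (5:Fin 10) = 1 from by norm_num [cbGensR, show cbGens 1 (5:Fin 10) = 1 from rfl], show cbGensR 2 (5:Fin 10) = 0 from by norm_num [cbGensR, show cbGens 2 (5:Fin 10) = 0 from rfl], show cbGensR 3 (5:Fin 10) = 0 from by norm_num [cbGensR, show cbGens 3 (5:Fin 10) = 0 from rfl], show cbGensR 4 (5:Fin 10) = 1 from by norm_num [cbGensR, show cbGens 4 (5:Fin 10) = 1 from rfl], show cbGensR 5 (5:Fin 10) = 0 from by norm_num [cbGensR, show cbGens 5 (5:Fin 10) = 0 from rfl], show cbGensR 6 (5:Fin 10) = 0 from by norm_num [cbGensR, show cbGens 6 (5:Fin 10) = 0 from rfl], show cbGensR 7 (5:Fin 10) = 0 from by norm_num [cbGensR, show cbGens 7 (5:Fin 10) = 0 from rfl], show cbGensR 8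 (5:Fin 10) = 0 from by norm_num [cbGensR, show cbGens 8 (5:Fin 10) = 0 from rfl]]
  ring

lemma gsumZ6 (n : Fin 9 → ℤ) : ∑ r, n r * cbGens r (6:Fin 10) = n 2 + n 3 := by
  rw [sum9 (fun r => n r * cbGens r (6:Fin 10))]
  simp only [show cbGens 0 (6:Fin 10) = 0 from rfl, show cbGens 1 (6:Fin 10) = 0 from rfl, show cbGens 2 (6:Fin 10) = 1 from rfl, show cbGens 3 (6:Fin 10) = 1 from rfl, show cbGens 4 (6:Fin 10) = 0 from rfl, show cbGens 5 (6:Fin 10) = 0 from rfl, show cbGens 6 (6:Fin 10) = 0 from rfl, show cbGens 7 (6:Fin 10) = 0 from rfl, show cbGens 8 (6:Fin 10) = 0 from rfl]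
  ring

lemma gsumR6 (n : Fin 9 → ℝ) : ∑ r, n r * cbGensR r (6:Fin 10) = n 2 + n 3 := by
  rw [sum9 (fun r => n r * cbGensR r (6:Fin 10))]
  simp only [show cbGensR 0 (6:Fin 10) = 0 from by norm_num [cbGensR, show cbGens 0 (6:Fin 10) = 0 from rfl], show cbGensR 1 (6:Fin 10) = 0 from by norm_num [cbGensR, show cbGens 1 (6:Fin 10) = 0 from rfl], show cbGensR 2 (6:Fin 10) = 1 from by norm_num [cbGensR, show cbGens 2 (6:Fin 10) = 1 from rfl], show cbGensR 3 (6:Fin 10) = 1 from by norm_num [cbGensR, show cbGens 3 (6:Fin 10) = 1 from rfl], show cbGensR 4 (6:Fin 10) = 0 from by norm_num [cbGensR, show cbGens 4 (6:Fin 10) = 0 from rfl], show cbGensR 5 (6:Fin 10) = 0 from by norm_num [cbGensR, show cbGens 5 (6:Fin 10) = 0 from rfl], show cbGensR 6 (6:Fin 10) = 0 from by norm_num [cbGensR, show cbGens 6 (6:Fin 10) = 0 from rfl], show cbGensR 7 (6:Fin 10) = 0 from by norm_num [cbGensR, show cbGens 7 (6:Fin 10) = 0 from rfl], show cbGensR 8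 (6:Fin 10) = 0 from by norm_num [cbGensR, show cbGens 8 (6:Fin 10) = 0 from rfl]]
  ring

lemma gsumZ7 (n : Fin 9 → ℤ) : ∑ r, n r * cbGens r (7:Fin 10) = n 1 + n 5 := by
  rw [sum9 (fun r => n r * cbGens r (7:Fin 10))]
  simp only [show cbGens 0 (7:Fin 10) = 0 from rfl, show cbGens 1 (7:Fin 10) = 1 from rfl, show cbGens 2 (7:Fin 10) = 0 from rfl, show cbGens 3 (7:Fin 10) = 0 from rfl, show cbGens 4 (7:Fin 10) = 0 from rfl, show cbGens 5 (7:Fin 10) = 1 from rfl, show cbGens 6 (7:Fin 10) = 0 from rfl, show cbGens 7 (7:Fin 10) = 0 from rfl, show cbGens 8 (7:Fin 10) = 0 from rfl]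
  ring

lemma gsumR7 (n : Fin 9 → ℝ) : ∑ r, n r * cbGensR r (7:Fin 10) = n 1 + n 5 := by
  rw [sum9 (fun r => n r * cbGensR r (7:Fin 10))]
  simp only [show cbGensR 0 (7:Fin 10) = 0 from by norm_num [cbGensR, show cbGens 0 (7:Fin 10) = 0 from rfl], show cbGensR 1 (7:Fin 10) = 1 from by norm_num [cbGensR, show cbGens 1 (7:Fin 10) = 1 from rfl], show cbGensR 2 (7:Fin 10) = 0 from by norm_num [cbGensR, show cbGens 2 (7:Fin 10) = 0 from rfl], show cbGensR 3 (7:Fin 10) = 0 from by norm_num [cbGensR, show cbGens 3 (7:Fin 10) = 0 from rfl], show cbGensR 4 (7:Fin 10) = 0 from by norm_num [cbGensR, show cbGens 4 (7:Fin 10) = 0 from rfl], show cbGensR 5 (7:Fin 10) = 1 from by norm_num [cbGensR, show cbGens 5 (7:Fin 10) = 1 from rfl], show cbGensR 6 (7:Fin 10) = 0 from by norm_num [cbGensR, show cbGens 6 (7:Fin 10) = 0 from rfl], show cbGensR 7 (7:Fin 10) = 0 from by norm_num [cbGensR, show cbGens 7 (7:Fin 10) = 0 from rfl], show cbGensR 8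 (7:Fin 10) = 0 from by norm_num [cbGensR, show cbGens 8 (7:Fin 10) = 0 from rfl]]
  ring

lemma gsumZ8 (n : Fin 9 → ℤ) : ∑ r, n r * cbGens r (8:Fin 10) = n 2 + n 4 := by
  rw [sum9 (fun r => n r * cbGens r (8:Fin 10))]
  simp only [show cbGens 0 (8:Fin 10) = 0 from rfl, show cbGens 1 (8:Fin 10) = 0 from rfl, show cbGens 2 (8:Fin 10) = 1 from rfl, show cbGens 3 (8:Fin 10) = 0 from rfl, show cbGens 4 (8:Fin 10) = 1 from rfl, show cbGens 5 (8:Fin 10) = 0 from rfl, show cbGens 6 (8:Fin 10) = 0 from rfl, show cbGens 7 (8:Fin 10) = 0 from rfl, show cbGens 8 (8:Fin 10) = 0 from rfl]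
  ring

lemma gsumR8 (n : Fin 9 → ℝ) : ∑ r, n r * cbGensR r (8:Fin 10) = n 2 + n 4 := by
  rw [sum9 (fun r => n r * cbGensR r (8:Fin 10))]
  simp only [show cbGensR 0 (8:Fin 10) = 0 from by norm_num [cbGensR, show cbGens 0 (8:Fin 10) = 0 from rfl], show cbGensR 1 (8:Fin 10) = 0 from by norm_num [cbGensR, show cbGens 1 (8:Fin 10) = 0 from rfl], show cbGensR 2 (8:Fin 10) = 1 from by norm_num [cbGensR, show cbGens 2 (8:Fin 10) = 1 from rfl], show cbGensR 3 (8:Fin 10) = 0 from by norm_num [cbGensR, show cbGens 3 (8:Fin 10) = 0 from rfl], show cbGensR 4 (8:Fin 10) = 1 from by norm_num [cbGensR, show cbGens 4 (8:Fin 10) = 1 from rfl], show cbGensR 5 (8:Fin 10) = 0 from by norm_num [cbGensR, show cbGens 5 (8:Fin 10) = 0 from rfl], show cbGensR 6 (8:Fin 10) = 0 from by norm_num [cbGensR, show cbGens 6 (8:Fin 10) = 0 from rfl], show cbGensR 7 (8:Fin 10) = 0 from by norm_num [cbGensR, show cbGens 7 (8:Fin 10) = 0 from rfl], show cbGensR 8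 (8:Fin 10) = 0 from by norm_num [cbGensR, show cbGens 8 (8:Fin 10) = 0 from rfl]]
  ring

lemma gsumZ9 (n : Fin 9 → ℤ) : ∑ r, n r * cbGens r (9:Fin 10) = n 0 + n 1 + n 2 + n 3 + n 4 + n 5 + n 6 + n 7 + n 8 := by
  rw [sum9 (fun r => n r * cbGens r (9:Fin 10))]
  simp only [show cbGens 0 (9:Fin 10) = 1 from rfl, show cbGens 1 (9:Fin 10) = 1 from rfl, show cbGens 2 (9:Fin 10) = 1 from rfl, show cbGens 3 (9:Fin 10) = 1 from rfl, show cbGens 4 (9:Fin 10) = 1 from rfl, show cbGens 5 (9:Fin 10) = 1 from rfl, show cbGens 6 (9:Fin 10) = 1 from rfl, show cbGens 7 (9:Fin 10) = 1 from rfl, show cbGens 8 (9:Fin 10) = 1 from rfl]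
  ring

lemma gsumR9 (n : Fin 9 → ℝ) : ∑ r, n r * cbGensR r (9:Fin 10) = n 0 + n 1 + n 2 + n 3 + n 4 + n 5 + n 6 + n 7 + n 8 := by
  rw [sum9 (fun r => n r * cbGensR r (9:Fin 10))]
  simp only [show cbGensR 0 (9:Fin 10) = 1 from by norm_num [cbGensR, show cbGens 0 (9:Fin 10) = 1 from rfl], show cbGensR 1 (9:Fin 10) = 1 from by norm_num [cbGensR, show cbGens 1 (9:Fin 10) = 1 from rfl], show cbGensR 2 (9:Fin 10) = 1 from by norm_num [cbGensR, show cbGens 2 (9:Fin 10) = 1 from rfl], show cbGensR 3 (9:Fin 10) = 1 from by norm_num [cbGensR, show cbGens 3 (9:Fin 10) = 1 from rfl], show cbGensR 4 (9:Fin 10) = 1 from by norm_num [cbGensR, show cbGens 4 (9:Fin 10) = 1 from rfl], show cbGensR 5 (9:Fin 10) = 1 from by norm_num [cbGensR, show cbGens 5 (9:Fin 10) = 1 from rfl], show cbGensR 6 (9:Fin 10) = 1 from by norm_num [cbGensR, show cbGens 6 (9:Fin 10) = 1 from rfl], show cbGensR 7 (9:Fin 10) = 1 from by norm_num [cbGensR,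 show cbGens 7 (9:Fin 10) = 1 from rfl], show cbGensR 8 (9:Fin 10) = 1 from by norm_num [cbGensR, show cbGens 8 (9:Fin 10) = 1 from rfl]]
  ring

lemma cntEval_0_10 (n : Fin 9 → ℤ) : cnt 0 ((1:ℤ),(0:ℤ)) n = n 1 + n 3 + n 8 := by
  rw [cnt, sum9 (fun r => if bdg 0 r = ((1:ℤ),(0:ℤ)) then n r else 0)]
  rw [if_neg (show bdg 0 0 ≠ ((1:ℤ),(0:ℤ)) from by decide)]
  rw [if_pos (show bdg 0 1 = ((1:ℤ),(0:ℤ)) from rfl)]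
  rw [if_neg (show bdg 0 2 ≠ ((1:ℤ),(0:ℤ)) from by decide)]
  rw [if_pos (show bdg 0 3 = ((1:ℤ),(0:ℤ)) from rfl)]
  rw [if_neg (show bdg 0 4 ≠ ((1:ℤ),(0:ℤ)) from by decide)]
  rw [if_neg (show bdg 0 5 ≠ ((1:ℤ),(0:ℤ)) from by decide)]
  rw [if_neg (show bdg 0 6 ≠ ((1:ℤ),(0:ℤ)) from by decide)]
  rw [if_neg (show bdg 0 7 ≠ ((1:ℤ),(0:ℤ)) from by decide)]
  rw [if_pos (show bdg 0 8 = ((1:ℤ),(0:ℤ)) from rfl)]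
  ring

lemma cntEval_0_01 (n : Fin 9 → ℤ) : cnt 0 ((0:ℤ),(1:ℤ)) n = n 2 + n 5 + n 6 := by
  rw [cnt, sum9 (fun r => if bdg 0 r = ((0:ℤ),(1:ℤ)) then n r else 0)]
  rw [if_neg (show bdg 0 0 ≠ ((0:ℤ),(1:ℤ)) from by decide)]
  rw [if_neg (show bdg 0 1 ≠ ((0:ℤ),(1:ℤ)) from by decide)]
  rw [if_pos (show bdg 0 2 = ((0:ℤ),(1:ℤ)) from rfl)]
  rw [if_neg (show bdg 0 3 ≠ ((0:ℤ),(1:ℤ)) from by decide)]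
  rw [if_neg (show bdg 0 4 ≠ ((0:ℤ),(1:ℤ)) from by decide)]
  rw [if_pos (show bdg 0 5 = ((0:ℤ),(1:ℤ)) from rfl)]
  rw [if_pos (show bdg 0 6 = ((0:ℤ),(1:ℤ)) from rfl)]
  rw [if_neg (show bdg 0 7 ≠ ((0:ℤ),(1:ℤ)) from by decide)]
  rw [if_neg (show bdg 0 8 ≠ ((0:ℤ),(1:ℤ)) from by decide)]
  ring

lemma cntEval_0_00 (n : Fin 9 → ℤ) : cnt 0 ((0:ℤ),(0:ℤ)) n = n 0 + n 4 + n 7 := by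
  rw [cnt, sum9 (fun r => if bdg 0 r = ((0:ℤ),(0:ℤ)) then n r else 0)]
  rw [if_pos (show bdg 0 0 = ((0:ℤ),(0:ℤ)) from rfl)]
  rw [if_neg (show bdg 0 1 ≠ ((0:ℤ),(0:ℤ)) from by decide)]
  rw [if_neg (show bdg 0 2 ≠ ((0:ℤ),(0:ℤ)) from by decide)]
  rw [if_neg (show bdg 0 3 ≠ ((0:ℤ),(0:ℤ)) from by decide)]
  rw [if_pos (show bdg 0 4 = ((0:ℤ),(0:ℤ)) from rfl)]
  rw [if_neg (show bdg 0 5 ≠ ((0:ℤ),(0:ℤ)) from by decide)]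
  rw [if_neg (show bdg 0 6 ≠ ((0:ℤ),(0:ℤ)) from by decide)]
  rw [if_pos (show bdg 0 7 = ((0:ℤ),(0:ℤ)) from rfl)]
  rw [if_neg (show bdg 0 8 ≠ ((0:ℤ),(0:ℤ)) from by decide)]
  ring

lemma cntEval_1_10 (n : Fin 9 → ℤ) : cnt 1 ((1:ℤ),(0:ℤ)) n = n 1 + n 4 + n 6 := by
  rw [cnt, sum9 (fun r => if bdg 1 r = ((1:ℤ),(0:ℤ)) then n r else 0)]
  rw [if_neg (show bdg 1 0 ≠ ((1:ℤ),(0:ℤ)) from by decide)]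
  rw [if_pos (show bdg 1 1 = ((1:ℤ),(0:ℤ)) from rfl)]
  rw [if_neg (show bdg 1 2 ≠ ((1:ℤ),(0:ℤ)) from by decide)]
  rw [if_neg (show bdg 1 3 ≠ ((1:ℤ),(0:ℤ)) from by decide)]
  rw [if_pos (show bdg 1 4 = ((1:ℤ),(0:ℤ)) from rfl)]
  rw [if_neg (show bdg 1 5 ≠ ((1:ℤ),(0:ℤ)) from by decide)]
  rw [if_pos (show bdg 1 6 = ((1:ℤ),(0:ℤ)) from rfl)]
  rw [if_neg (show bdg 1 7 ≠ ((1:ℤ),(0:ℤ)) from by decide)]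
  rw [if_neg (show bdg 1 8 ≠ ((1:ℤ),(0:ℤ)) from by decide)]
  ring

lemma cntEval_1_01 (n : Fin 9 → ℤ) : cnt 1 ((0:ℤ),(1:ℤ)) n = n 2 + n 3 + n 7 := by
  rw [cnt, sum9 (fun r => if bdg 1 r = ((0:ℤ),(1:ℤ)) then n r else 0)]
  rw [if_neg (show bdg 1 0 ≠ ((0:ℤ),(1:ℤ)) from by decide)]
  rw [if_neg (show bdg 1 1 ≠ ((0:ℤ),(1:ℤ)) from by decide)]
  rw [if_pos (show bdg 1 2 = ((0:ℤ),(1:ℤ)) from rfl)]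
  rw [if_pos (show bdg 1 3 = ((0:ℤ),(1:ℤ)) from rfl)]
  rw [if_neg (show bdg 1 4 ≠ ((0:ℤ),(1:ℤ)) from by decide)]
  rw [if_neg (show bdg 1 5 ≠ ((0:ℤ),(1:ℤ)) from by decide)]
  rw [if_neg (show bdg 1 6 ≠ ((0:ℤ),(1:ℤ)) from by decide)]
  rw [if_pos (show bdg 1 7 = ((0:ℤ),(1:ℤ)) from rfl)]
  rw [if_neg (show bdg 1 8 ≠ ((0:ℤ),(1:ℤ)) from by decide)]
  ring

lemma cntEval_1_00 (n : Fin 9 → ℤ) : cnt 1 ((0:ℤ),(0:ℤ)) n = n 0 + n 5 + n 8 := by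
  rw [cnt, sum9 (fun r => if bdg 1 r = ((0:ℤ),(0:ℤ)) then n r else 0)]
  rw [if_pos (show bdg 1 0 = ((0:ℤ),(0:ℤ)) from rfl)]
  rw [if_neg (show bdg 1 1 ≠ ((0:ℤ),(0:ℤ)) from by decide)]
  rw [if_neg (show bdg 1 2 ≠ ((0:ℤ),(0:ℤ)) from by decide)]
  rw [if_neg (show bdg 1 3 ≠ ((0:ℤ),(0:ℤ)) from by decide)]
  rw [if_neg (show bdg 1 4 ≠ ((0:ℤ),(0:ℤ)) from by decide)]
  rw [if_pos (show bdg 1 5 = ((0:ℤ),(0:ℤ)) from rfl)]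
  rw [if_neg (show bdg 1 6 ≠ ((0:ℤ),(0:ℤ)) from by decide)]
  rw [if_neg (show bdg 1 7 ≠ ((0:ℤ),(0:ℤ)) from by decide)]
  rw [if_pos (show bdg 1 8 = ((0:ℤ),(0:ℤ)) from rfl)]
  ring

lemma cntEval_2_10 (n : Fin 9 → ℤ) : cnt 2 ((1:ℤ),(0:ℤ)) n = n 1 + n 5 + n 7 := by
  rw [cnt, sum9 (fun r => if bdg 2 r = ((1:ℤ),(0:ℤ)) then n r else 0)]
  rw [if_neg (show bdg 2 0 ≠ ((1:ℤ),(0:ℤ)) from by decide)]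
  rw [if_pos (show bdg 2 1 = ((1:ℤ),(0:ℤ)) from rfl)]
  rw [if_neg (show bdg 2 2 ≠ ((1:ℤ),(0:ℤ)) from by decide)]
  rw [if_neg (show bdg 2 3 ≠ ((1:ℤ),(0:ℤ)) from by decide)]
  rw [if_neg (show bdg 2 4 ≠ ((1:ℤ),(0:ℤ)) from by decide)]
  rw [if_pos (show bdg 2 5 = ((1:ℤ),(0:ℤ)) from rfl)]
  rw [if_neg (show bdg 2 6 ≠ ((1:ℤ),(0:ℤ)) from by decide)]
  rw [if_pos (show bdg 2 7 = ((1:ℤ),(0:ℤ)) from rfl)]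
  rw [if_neg (show bdg 2 8 ≠ ((1:ℤ),(0:ℤ)) from by decide)]
  ring

lemma cntEval_2_01 (n : Fin 9 → ℤ) : cnt 2 ((0:ℤ),(1:ℤ)) n = n 2 + n 4 + n 8 := by
  rw [cnt, sum9 (fun r => if bdg 2 r = ((0:ℤ),(1:ℤ)) then n r else 0)]
  rw [if_neg (show bdg 2 0 ≠ ((0:ℤ),(1:ℤ)) from by decide)]
  rw [if_neg (show bdg 2 1 ≠ ((0:ℤ),(1:ℤ)) from by decide)]
  rw [if_pos (show bdg 2 2 = ((0:ℤ),(1:ℤ)) from rfl)]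
  rw [if_neg (show bdg 2 3 ≠ ((0:ℤ),(1:ℤ)) from by decide)]
  rw [if_pos (show bdg 2 4 = ((0:ℤ),(1:ℤ)) from rfl)]
  rw [if_neg (show bdg 2 5 ≠ ((0:ℤ),(1:ℤ)) from by decide)]
  rw [if_neg (show bdg 2 6 ≠ ((0:ℤ),(1:ℤ)) from by decide)]
  rw [if_neg (show bdg 2 7 ≠ ((0:ℤ),(1:ℤ)) from by decide)]
  rw [if_pos (show bdg 2 8 = ((0:ℤ),(1:ℤ)) from rfl)]
  ring

lemma cntEval_2_00 (n : Fin 9 → ℤ) : cnt 2 ((0:ℤ),(0:ℤ)) n = n 0 + n 3 + n 6 := by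
  rw [cnt, sum9 (fun r => if bdg 2 r = ((0:ℤ),(0:ℤ)) then n r else 0)]
  rw [if_pos (show bdg 2 0 = ((0:ℤ),(0:ℤ)) from rfl)]
  rw [if_neg (show bdg 2 1 ≠ ((0:ℤ),(0:ℤ)) from by decide)]
  rw [if_neg (show bdg 2 2 ≠ ((0:ℤ),(0:ℤ)) from by decide)]
  rw [if_pos (show bdg 2 3 = ((0:ℤ),(0:ℤ)) from rfl)]
  rw [if_neg (show bdg 2 4 ≠ ((0:ℤ),(0:ℤ)) from by decide)]
  rw [if_neg (show bdg 2 5 ≠ ((0:ℤ),(0:ℤ)) from by decide)]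
  rw [if_pos (show bdg 2 6 = ((0:ℤ),(0:ℤ)) from rfl)]
  rw [if_neg (show bdg 2 7 ≠ ((0:ℤ),(0:ℤ)) from by decide)]
  rw [if_neg (show bdg 2 8 ≠ ((0:ℤ),(0:ℤ)) from by decide)]
  ring


lemma mem_coneC_of_int (x : Fin 10 → ℤ) (n : Fin 9 → ℤ) (hn : ∀ r, 0 ≤ n r)
    (hx : ∀ t, x t = ∑ r, n r * cbGens r t) :
    (fun t => (x t : ℝ)) ∈ coneC := by
  refine ⟨fun r => (n r : ℝ), fun r => show (0:ℝ) ≤ (n r : ℝ) by exact_mod_cast hn r, ?_⟩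
  funext t
  have := hx t
  simp only [Finset.sum_apply, Pi.smul_apply, cbGensR, smul_eq_mul]
  exact_mod_cast this

lemma int_decomp (x : Fin 10 → ℤ) (hx : (fun t => (x t : ℝ)) ∈ coneC) :
    ∃ n : Fin 9 → ℤ, (∀ r, 0 ≤ n r) ∧ ∀ t, x t = ∑ r, n r * cbGens r t := by
  obtain ⟨c, hc, hy⟩ := hx
  have h : ∀ t, (x t : ℝ) = ∑ r : Fin 9, c r * cbGensR r t := by
    intro t
    have := congrFun hy t
    simpa [Finset.sum_apply, smul_eq_mul] using this
  have h0 : (x 0 : ℝ) = c 8 := (h 0).trans (gsumR0 c)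
  have h1 : (x 1 : ℝ) = c 6 := (h 1).trans (gsumR1 c)
  have h2 : (x 2 : ℝ) = c 7 := (h 2).trans (gsumR2 c)
  have h3 : (x 3 : ℝ) = c 1 + c 3 := (h 3).trans (gsumR3 c)
  have h4 : (x 4 : ℝ) = c 2 + c 5 := (h 4).trans (gsumR4 c)
  have h5 : (x 5 : ℝ) = c 1 + c 4 := (h 5).trans (gsumR5 c)
  have h6 : (x 6 : ℝ) = c 2 + c 3 := (h 6).trans (gsumR6 c)
  have h7 : (x 7 : ℝ) = c 1 + c 5 := (h 7).trans (gsumR7 c)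
  have h8 : (x 8 : ℝ) = c 2 + c 4 := (h 8).trans (gsumR8 c)
  have h9 : (x 9 : ℝ) = c 0 + c 1 + c 2 + c 3 + c 4 + c 5 + c 6 + c 7 + c 8 := by
    have := (h 9).trans (gsumR9 c); linarith
  set B : ℤ := ⌊c 1⌋ with hB
  have hBr : (B : ℝ) = c 1 - Int.fract (c 1) := by rw [Int.fract]; push_cast; ring
  have hf0 : (0:ℝ) ≤ Int.fract (c 1) := Int.fract_nonneg _
  have hf1 : Int.fract (c 1) < 1 := Int.fract_lt_one _
  have key : ∀ m : ℤ, (-1 : ℝ) < (m : ℝ) → 0 ≤ m := by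
    intro m hm
    have : (-1 : ℤ) < m := by exact_mod_cast hm
    omega
  have cast_nn : ∀ m : ℤ, (0:ℝ) ≤ (m:ℝ) → 0 ≤ m := fun m hm => by exact_mod_cast hm
  set nv : Fin 9 → ℤ :=
    ![x 9 - (B + (x 4 - x 7 + B) + (x 3 - B) + (x 5 - B) + (x 7 - B) + x 1 + x 2 + x 0),
      B, x 4 - x 7 + B, x 3 - B, x 5 - B, x 7 - B, x 1, x 2, x 0] with hnv
  have e6 : x 6 = x 3 + x 4 - x 7 := by
    have : (x 6 : ℝ) = ((x 3 + x 4 - x 7 : ℤ) : ℝ) := by push_cast; rw [h6, h3, h4, h7]; ring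
    exact_mod_cast this
  have e8 : x 8 = x 4 + x 5 - x 7 := by
    have : (x 8 : ℝ) = ((x 4 + x 5 - x 7 : ℤ) : ℝ) := by push_cast; rw [h8, h4, h5, h7]; ring
    exact_mod_cast this
  refine ⟨nv, ?_, ?_⟩
  · have nn0 : 0 ≤ x 9 - (B + (x 4 - x 7 + B) + (x 3 - B) + (x 5 - B) + (x 7 - B) + x 1 + x 2 + x 0) := by
      apply key; push_cast
      rw [h9, h4, h7, h3, h5, h1, h2, h0, hBr]
      have := hc 0; nlinarith [hc 0]
    have nn1 : 0 ≤ B := Int.floor_nonneg.mpr (hc 1)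
    have nn2 : 0 ≤ x 4 - x 7 + B := by
      apply key; push_cast; rw [h4, h7, hBr]; have := hc 2; linarith
    have nn3 : 0 ≤ x 3 - B := by
      apply cast_nn; push_cast; rw [h3, hBr]; have := hc 3; linarith
    have nn4 : 0 ≤ x 5 - B := by
      apply cast_nn; push_cast; rw [h5, hBr]; have := hc 4; linarith
    have nn5 : 0 ≤ x 7 - B := by
      apply cast_nn; push_cast; rw [h7, hBr]; have := hc 5; linarith
    have nn6 : 0 ≤ x 1 := by apply cast_nn; rw [h1]; exact hc 6
    have nn7 : 0 ≤ x 2 := by apply cast_nn; rw [h2]; exact hc 7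
    have nn8 : 0 ≤ x 0 := by apply cast_nn; rw [h0]; exact hc 8
    intro r
    fin_cases r
    exacts [nn0, nn1, nn2, nn3, nn4, nn5, nn6, nn7, nn8]
  · have E0 : x 0 = ∑ r, nv r * cbGens r 0 := by rw [gsumZ0]; rfl
    have E1 : x 1 = ∑ r, nv r * cbGens r 1 := by rw [gsumZ1]; rfl
    have E2 : x 2 = ∑ r, nv r * cbGens r 2 := by rw [gsumZ2]; rfl
    have E3 : x 3 = ∑ r, nv r * cbGens r 3 := by rw [gsumZ3]; show x 3 = B + (x 3 - B); ring
    have E4 : x 4 = ∑ r, nv r * cbGens r 4 := by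
      rw [gsumZ4]; show x 4 = (x 4 - x 7 + B) + (x 7 - B); ring
    have E5 : x 5 = ∑ r, nv r * cbGens r 5 := by
      rw [gsumZ5]; show x 5 = B + (x 5 - B); ring
    have E6 : x 6 = ∑ r, nv r * cbGens r 6 := by
      rw [gsumZ6]; show x 6 = (x 4 - x 7 + B) + (x 3 - B); omega
    have E7 : x 7 = ∑ r, nv r * cbGens r 7 := by
      rw [gsumZ7]; show x 7 = B + (x 7 - B); ring
    have E8 : x 8 = ∑ r, nv r * cbGens r 8 := by
      rw [gsumZ8]; show x 8 = (x 4 - x 7 + B) + (x 5 - B); omega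
    have E9 : x 9 = ∑ r, nv r * cbGens r 9 := by
      rw [gsumZ9]
      show x 9 = x 9 - (B + (x 4 - x 7 + B) + (x 3 - B) + (x 5 - B) + (x 7 - B) + x 1 + x 2 + x 0)
        + B + (x 4 - x 7 + B) + (x 3 - B) + (x 5 - B) + (x 7 - B) + (x 1) + (x 2) + (x 0)
      ring
    intro t
    fin_cases t
    exacts [E0, E1, E2, E3, E4, E5, E6, E7, E8, E9]

lemma cnt_bd0 (n : Fin 9 → ℤ) (x : Fin 10 → ℤ)
    (hx : ∀ t, x t = ∑ r, n r * cbGens r t) :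
    cnt 0 (1,0) n = (bd10 x 0).1 ∧ cnt 0 (0,1) n = (bd10 x 0).2 ∧
    cnt 0 (0,0) n = (∑ r, n r) - (bd10 x 0).1 - (bd10 x 0).2 := by
  have a0 := (hx 0).trans (gsumZ0 n)
  have a1 := (hx 1).trans (gsumZ1 n)
  have a2 := (hx 2).trans (gsumZ2 n)
  have a3 := (hx 3).trans (gsumZ3 n)
  have a4 := (hx 4).trans (gsumZ4 n)
  have a5 := (hx 5).trans (gsumZ5 n)
  have a6 := (hx 6).trans (gsumZ6 n)
  have a7 := (hx 7).trans (gsumZ7 n)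
  have a8 := (hx 8).trans (gsumZ8 n)
  have a9 := (hx 9).trans (gsumZ9 n)
  have hs := sum9 n
  refine ⟨?_, ?_, ?_⟩
  · rw [cntEval_0_10, show (bd10 x 0).1 = x 0 + x 3 from rfl]; omega
  · rw [cntEval_0_01, show (bd10 x 0).2 = x 4 + x 1 from rfl]; omega
  · rw [cntEval_0_00, hs, show (bd10 x 0).1 = x 0 + x 3 from rfl,
      show (bd10 x 0).2 = x 4 + x 1 from rfl]; omega

lemma cnt_bd1 (n : Fin 9 → ℤ) (x : Fin 10 → ℤ)
    (hx : ∀ t, x t = ∑ r, n r * cbGens r t) :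
    cnt 1 (1,0) n = (bd10 x 1).1 ∧ cnt 1 (0,1) n = (bd10 x 1).2 ∧
    cnt 1 (0,0) n = (∑ r, n r) - (bd10 x 1).1 - (bd10 x 1).2 := by
  have a0 := (hx 0).trans (gsumZ0 n)
  have a1 := (hx 1).trans (gsumZ1 n)
  have a2 := (hx 2).trans (gsumZ2 n)
  have a3 := (hx 3).trans (gsumZ3 n)
  have a4 := (hx 4).trans (gsumZ4 n)
  have a5 := (hx 5).trans (gsumZ5 n)
  have a6 := (hx 6).trans (gsumZ6 n)
  have a7 := (hx 7).trans (gsumZ7 n)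
  have a8 := (hx 8).trans (gsumZ8 n)
  have a9 := (hx 9).trans (gsumZ9 n)
  have hs := sum9 n
  refine ⟨?_, ?_, ?_⟩
  · rw [cntEval_1_10, show (bd10 x 1).1 = x 1 + x 5 from rfl]; omega
  · rw [cntEval_1_01, show (bd10 x 1).2 = x 6 + x 2 from rfl]; omega
  · rw [cntEval_1_00, hs, show (bd10 x 1).1 = x 1 + x 5 from rfl,
      show (bd10 x 1).2 = x 6 + x 2 from rfl]; omega

lemma cnt_bd2 (n : Fin 9 → ℤ) (x : Fin 10 → ℤ)
    (hx : ∀ t, x t = ∑ r, n r * cbGens r t) :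
    cnt 2 (1,0) n = (bd10 x 2).1 ∧ cnt 2 (0,1) n = (bd10 x 2).2 ∧
    cnt 2 (0,0) n = (∑ r, n r) - (bd10 x 2).1 - (bd10 x 2).2 := by
  have a0 := (hx 0).trans (gsumZ0 n)
  have a1 := (hx 1).trans (gsumZ1 n)
  have a2 := (hx 2).trans (gsumZ2 n)
  have a3 := (hx 3).trans (gsumZ3 n)
  have a4 := (hx 4).trans (gsumZ4 n)
  have a5 := (hx 5).trans (gsumZ5 n)
  have a6 := (hx 6).trans (gsumZ6 n)
  have a7 := (hx 7).trans (gsumZ7 n)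
  have a8 := (hx 8).trans (gsumZ8 n)
  have a9 := (hx 9).trans (gsumZ9 n)
  have hs := sum9 n
  refine ⟨?_, ?_, ?_⟩
  · rw [cntEval_2_10, show (bd10 x 2).1 = x 2 + x 7 from rfl]; omega
  · rw [cntEval_2_01, show (bd10 x 2).2 = x 8 + x 0 from rfl]; omega
  · rw [cntEval_2_00, hs, show (bd10 x 2).1 = x 2 + x 7 from rfl,
      show (bd10 x 2).2 = x 8 + x 0 from rfl]; omega

lemma cnt_bd (i : Fin 3) (n : Fin 9 → ℤ) (x : Fin 10 → ℤ)
    (hx : ∀ t, x t = ∑ r, n r * cbGens r t) :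
    cnt i (1,0) n = (bd10 x i).1 ∧ cnt i (0,1) n = (bd10 x i).2 ∧
    cnt i (0,0) n = (∑ r, n r) - (bd10 x i).1 - (bd10 x i).2 := by
  fin_cases i
  exacts [cnt_bd0 n x hx, cnt_bd1 n x hx, cnt_bd2 n x hx]

lemma bdg_cases : ∀ (i : Fin 3) (r : Fin 9),
    bdg i r = (0,0) ∨ bdg i r = (1,0) ∨ bdg i r = (0,1) := by decide

lemma sw_sw (p : ℤ × ℤ) : sw (sw p) = p := rfl

lemma cbGens_level : ∀ r, cbGens r 9 = 1 := by decide

lemma cnt_ge (i : Fin 3) (τ : ℤ × ℤ) (n : Fin 9 → ℤ) (hn : ∀ r, 0 ≤ n r)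
    (r₀ : Fin 9) (h : bdg i r₀ = τ) : n r₀ ≤ cnt i τ n := by
  have := Finset.single_le_sum (f := fun r => if bdg i r = τ then n r else 0)
    (fun r _ => by by_cases hb : bdg i r = τ <;> simp [hb, hn r]) (Finset.mem_univ r₀)
  rw [cnt]
  simpa [h] using this

lemma cnt_exists (i : Fin 3) (τ : ℤ × ℤ) (n : Fin 9 → ℤ) (hn : ∀ r, 0 ≤ n r)
    (h : 0 < cnt i τ n) : ∃ r, bdg i r = τ ∧ 1 ≤ n r := by
  by_contra hcon
  push_neg at hcon
  have : cnt i τ n ≤ 0 := by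
    apply Finset.sum_nonpos
    intro r _
    by_cases hb : bdg i r = τ
    · have := hcon r hb; simp [hb]; omega
    · simp [hb]
  omega

lemma pick_exists (n m : Fin 9 → ℤ) (hn : ∀ r, 0 ≤ n r) (hm : ∀ r, 0 ≤ m r)
    (i j : Fin 3) (hsum : ∑ r, n r = ∑ r, m r)
    (x y : Fin 10 → ℤ)
    (hx : ∀ t, x t = ∑ r, n r * cbGens r t) (hy : ∀ t, y t = ∑ r, m r * cbGens r t)
    (hbd : bd10 x i = sw (bd10 y j)) (r₀ : Fin 9) (h1 : 1 ≤ n r₀) :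
    ∃ r, 1 ≤ m r ∧ bdg j r = sw (bdg i r₀) := by
  obtain ⟨LxS, LxT, LxZ⟩ := cnt_bd i n x hx
  obtain ⟨LyS, LyT, LyZ⟩ := cnt_bd j m y hy
  have hb1 : (bd10 x i).1 = (bd10 y j).2 := by rw [hbd]; rfl
  have hb2 : (bd10 x i).2 = (bd10 y j).1 := by rw [hbd]; rfl
  have hc : cnt j (sw (bdg i r₀)) m = cnt i (bdg i r₀) n := by
    rcases bdg_cases i r₀ with h | h | h <;> rw [h]
    · show cnt j (0,0) m = cnt i (0,0) n
      omega
    · show cnt j (0,1) m = cnt i (1,0) n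
      omega
    · show cnt j (1,0) m = cnt i (0,1) n
      omega
  have hge : 0 < cnt i (bdg i r₀) n := lt_of_lt_of_le h1 (cnt_ge i _ n hn r₀ rfl)
  obtain ⟨r, hr1, hr2⟩ := cnt_exists j (sw (bdg i r₀)) m hm (hc ▸ hge)
  exact ⟨r, hr2, hr1⟩

lemma bd10_sub (a b : Fin 10 → ℤ) (i : Fin 3) :
    bd10 (fun t => a t - b t) i = bd10 a i - bd10 b i := by
  have h0 : bd10 (fun t => a t - b t) 0 = bd10 a 0 - bd10 b 0 := by
    show (a 0 - b 0 + (a 3 - b 3), a 4 - b 4 + (a 1 - b 1)) = (a 0 + a 3, a 4 + a 1) - (b 0 + b 3, b 4 + b 1)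
    rw [Prod.mk_sub_mk, Prod.mk.injEq]
    constructor <;> ring
  have h1 : bd10 (fun t => a t - b t) 1 = bd10 a 1 - bd10 b 1 := by
    show (a 1 - b 1 + (a 5 - b 5), a 6 - b 6 + (a 2 - b 2)) = (a 1 + a 5, a 6 + a 2) - (b 1 + b 5, b 6 + b 2)
    rw [Prod.mk_sub_mk, Prod.mk.injEq]
    constructor <;> ring
  have h2 : bd10 (fun t => a t - b t) 2 = bd10 a 2 - bd10 b 2 := by
    show (a 2 - b 2 + (a 7 - b 7), a 8 - b 8 + (a 0 - b 0)) = (a 2 + a 7, a 8 + a 0) - (b 2 + b 7, b 8 + b 0)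
    rw [Prod.mk_sub_mk, Prod.mk.injEq]
    constructor <;> ring
  fin_cases i
  exacts [h0, h1, h2]

lemma sw_sub (p q : ℤ × ℤ) : sw (p - q) = sw p - sw q := rfl

lemma select (V : Type) [Fintype V] [Nonempty V]
    (P : Finset (Sym2 (V × Fin 3)))
    (hnoloop : ∀ (v w : V) (i j : Fin 3), s((v, i), (w, j)) ∈ P → v ≠ w)
    (hconn : (SimpleGraph.fromRel
      (fun v w => ∃ i j : Fin 3, s((v, i), (w, j)) ∈ P)).Connected)
    (hcard : P.card = Fintype.card V - 1)
    (n : V → Fin 9 → ℤ) (hn : ∀ v r, 0 ≤ n v r)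
    (hL : ∀ v w, ∑ r, n v r = ∑ r, n w r) (hL1 : ∀ v, 1 ≤ ∑ r, n v r)
    (x : V → Fin 10 → ℤ) (hx : ∀ v t, x v t = ∑ r, n v r * cbGens r t)
    (hmatch : ∀ (v w : V) (i j : Fin 3),
      s((v, i), (w, j)) ∈ P → bd10 (x v) i = sw (bd10 (x w) j)) :
    ∃ c : V → Fin 9, (∀ v, 1 ≤ n v (c v)) ∧
      ∀ (v w : V) (i j : Fin 3), s((v, i), (w, j)) ∈ P →
        bdg i (c v) = sw (bdg j (c w)) := by
  classical
  set G := SimpleGraph.fromRel (fun v w => ∃ i j : Fin 3, s((v, i), (w, j)) ∈ P) with hG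
  set E : Finset V → Finset (Sym2 (V × Fin 3)) :=
    fun A => P.filter (fun p => ∀ h ∈ p, h.1 ∈ A) with hE
  have memE : ∀ (A : Finset V) (v w : V) (i j : Fin 3),
      s((v,i),(w,j)) ∈ E A ↔ (s((v,i),(w,j)) ∈ P ∧ v ∈ A ∧ w ∈ A) := by
    intro A v w i j
    constructor
    · intro h
      rw [hE, Finset.mem_filter] at h
      exact ⟨h.1, h.2 _ (Sym2.mem_mk_left _ _), h.2 _ (Sym2.mem_mk_right _ _)⟩
    · rintro ⟨hp, hv, hw⟩
      rw [hE, Finset.mem_filter]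
      refine ⟨hp, ?_⟩
      intro hh hmem
      rcases Sym2.mem_iff.mp hmem with rfl | rfl
      · exact hv
      · exact hw
  have cross : ∀ A : Finset V, A.Nonempty → A ≠ Finset.univ →
      ∃ v ∈ A, ∃ w, w ∉ A ∧ ∃ i j, s((v,i),(w,j)) ∈ P := by
    intro A hAne hne
    obtain ⟨a, ha⟩ := hAne
    obtain ⟨b, hb⟩ : ∃ b, b ∉ A := by
      by_contra h
      push_neg at h
      exact hne (Finset.eq_univ_iff_forall.mpr h)
    have walkcross : ∀ (u₁ u₂ : V) (_ : G.Walk u₁ u₂), u₁ ∈ A → u₂ ∉ A →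
        ∃ p ∈ A, ∃ q, q ∉ A ∧ G.Adj p q := by
      intro u₁ u₂ W
      induction W with
      | nil => intro h1 h2; exact absurd h1 h2
      | @cons u m v₂ h q ih =>
        intro h1 h2
        by_cases hm : m ∈ A
        · exact ih hm h2
        · exact ⟨u, h1, m, hm, h⟩
    obtain ⟨W⟩ := hconn.preconnected a b
    obtain ⟨p, hp, q, hq, hadj⟩ := walkcross a b W ha hb
    rw [hG, SimpleGraph.fromRel_adj] at hadj
    obtain ⟨-, hrel⟩ := hadj
    rcases hrel with ⟨i, j, hij⟩ | ⟨i, j, hij⟩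
    · exact ⟨p, hp, q, hq, i, j, hij⟩
    · exact ⟨p, hp, q, hq, j, i, by rwa [Sym2.eq_swap]⟩
  have grow : ∀ m : ℕ, ∀ B : Finset V, B.Nonempty → Fintype.card V - B.card = m →
      Fintype.card V - B.card + (E B).card ≤ P.card := by
    intro m
    induction m with
    | zero =>
      intro B _ h0
      have hle : B.card ≤ Fintype.card V := by
        simpa using Finset.card_le_univ B
      have : Fintype.card V - B.card = 0 := h0
      rw [this]
      simpa using Finset.card_le_card (Finset.filter_subset _ P)
    | succ m ih =>
      intro B hBne hm
      have hBneu : B ≠ Finset.univ := by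
        intro h
        rw [h, Finset.card_univ] at hm
        omega
      obtain ⟨v, hv, w, hw, i, j, hij⟩ := cross B hBne hBneu
      have hEsub : E B ⊆ E (insert w B) := by
        intro p hp
        rw [hE, Finset.mem_filter] at hp ⊢
        exact ⟨hp.1, fun h hmm => Finset.mem_insert_of_mem (hp.2 h hmm)⟩
      have hpmem : s((v,i),(w,j)) ∈ E (insert w B) :=
        (memE _ v w i j).mpr ⟨hij, Finset.mem_insert_of_mem hv, Finset.mem_insert_self w B⟩
      have hpnot : s((v,i),(w,j)) ∉ E B := fun h => hw ((memE B v w i j).mp h).2.2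
      have hcard' : (E B).card + 1 ≤ (E (insert w B)).card := by
        have hsub : insert (s((v,i),(w,j))) (E B) ⊆ E (insert w B) :=
          Finset.insert_subset hpmem hEsub
        have h1 := Finset.card_insert_of_notMem hpnot
        have h2 := Finset.card_le_card hsub
        omega
      have hle : B.card ≤ Fintype.card V := by simpa using Finset.card_le_univ B
      have hins : Fintype.card V - (insert w B).card = m := by
        rw [Finset.card_insert_of_notMem hw]
        omega
      have := ih (insert w B) ⟨w, Finset.mem_insert_self _ _⟩ hins
      rw [Finset.card_insert_of_notMem hw] at this
      omega
  have pick0 : ∀ v, ∃ r, 1 ≤ n v r := by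
    intro v
    by_contra h
    push_neg at h
    have hnp : ∑ r, n v r ≤ 0 := Finset.sum_nonpos (fun r _ => by have := h r; omega)
    have := hL1 v
    omega
  choose c₀ hc₀ using pick0
  have main : ∀ k : ℕ, k + 1 ≤ Fintype.card V →
      ∃ (A : Finset V) (c : V → Fin 9), A.card = k + 1 ∧ (E A).card = k ∧
        (∀ v, 1 ≤ n v (c v)) ∧
        (∀ (v w : V) (i j : Fin 3), s((v,i),(w,j)) ∈ P → v ∈ A → w ∈ A →
          bdg i (c v) = sw (bdg j (c w))) := by
    intro k
    induction k with
    | zero =>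
      intro _
      obtain ⟨v₀⟩ := ‹Nonempty V›
      refine ⟨{v₀}, c₀, by simp, ?_, hc₀, ?_⟩
      · rw [Finset.card_eq_zero, Finset.eq_empty_iff_forall_notMem]
        intro p
        induction p using Sym2.ind with
        | _ xx yy =>
          obtain ⟨a, ia⟩ := xx
          obtain ⟨b, ib⟩ := yy
          intro hp
          have hmm := (memE {v₀} a b ia ib).mp hp
          have hab : a ≠ b := hnoloop _ _ _ _ hmm.1
          simp only [Finset.mem_singleton] at hmm
          exact hab (hmm.2.1.trans hmm.2.2.symm)
      · intro v w i j hp hv hw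
        simp only [Finset.mem_singleton] at hv hw
        exact absurd (hv.trans hw.symm) (hnoloop v w i j hp)
    | succ k ih =>
      intro hk1
      obtain ⟨A, c, hAcard, hEcard, hcpos, hcprop⟩ := ih (by omega)
      have hAne : A.Nonempty := Finset.card_pos.mp (by omega)
      have hAneu : A ≠ Finset.univ := by
        intro h
        rw [h, Finset.card_univ] at hAcard
        omega
      obtain ⟨v, hv, w, hw, i, j, hij⟩ := cross A hAne hAneu
      obtain ⟨r, hr1, hr2⟩ := pick_exists (n v) (n w) (hn v) (hn w) i j (hL v w)
        (x v) (x w) (hx v) (hx w) (hmatch v w i j hij) (c v) (hcpos v)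
      set c' : V → Fin 9 := Function.update c w r with hc'
      have hc'w : c' w = r := Function.update_self _ _ _
      have hc'A : ∀ u, u ∈ A → c' u = c u := fun u hu =>
        Function.update_of_ne (by rintro rfl; exact hw hu) _ _
      set A' := insert w A with hA'
      have hvw : v ≠ w := fun h => hw (h ▸ hv)
      have hsub : insert (s((v,i),(w,j))) (E A) ⊆ E A' := by
        intro p hp
        rcases Finset.mem_insert.mp hp with rfl | hp
        · exact (memE A' v w i j).mpr
            ⟨hij, Finset.mem_insert_of_mem hv, Finset.mem_insert_self _ _⟩
        · rw [hE, Finset.mem_filter] at hp ⊢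
          exact ⟨hp.1, fun h hmm => Finset.mem_insert_of_mem (hp.2 h hmm)⟩
      have hpne : s((v,i),(w,j)) ∉ E A := fun h => hw ((memE A v w i j).mp h).2.2
      have hEA' : ∀ q ∈ E A', q = s((v,i),(w,j)) ∨ q ∈ E A := by
        by_contra hq
        push_neg at hq
        obtain ⟨q, hq1, hq2, hq3⟩ := hq
        have hq4 : q ∉ insert (s((v,i),(w,j))) (E A) := by
          rw [Finset.mem_insert]
          rintro (h | h)
          exacts [hq2 h, hq3 h]
        have hsub2 : insert q (insert (s((v,i),(w,j))) (E A)) ⊆ E A' :=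
          Finset.insert_subset hq1 hsub
        have hcard2 : k + 2 ≤ (E A').card := by
          have h1 := Finset.card_insert_of_notMem hpne
          have h3 := Finset.card_insert_of_notMem hq4
          have h4 := Finset.card_le_card hsub2
          omega
        have hA'card : A'.card = k + 2 := by
          rw [hA', Finset.card_insert_of_notMem hw, hAcard]
        have hgrow := grow (Fintype.card V - A'.card) A'
          ⟨w, Finset.mem_insert_self _ _⟩ rfl
        rw [hcard] at hgrow
        have hcV : 1 ≤ Fintype.card V := Fintype.card_pos
        rw [hA'card] at hgrow
        omega
      have hA'card : A'.card = k + 2 := by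
        rw [hA', Finset.card_insert_of_notMem hw, hAcard]
      have hEcard' : (E A').card = k + 1 := by
        apply le_antisymm
        · have hss : E A' ⊆ insert (s((v,i),(w,j))) (E A) := by
            intro q hq
            rcases hEA' q hq with rfl | h
            · exact Finset.mem_insert_self _ _
            · exact Finset.mem_insert_of_mem h
          have := Finset.card_le_card hss
          have h2 := Finset.card_insert_le (s((v,i),(w,j))) (E A)
          omega
        · have h1 := Finset.card_insert_of_notMem hpne
          have h2 := Finset.card_le_card hsub
          omega
      refine ⟨A', c', hA'card, hEcard', ?_, ?_⟩
      · intro u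
        by_cases hu : u = w
        · subst hu
          rw [hc'w]
          exact hr1
        · rw [hc', Function.update_of_ne hu]
          exact hcpos u
      · intro a b ia jb hab ha hb
        have hq := hEA' (s((a,ia),(b,jb))) ((memE A' a b ia jb).mpr ⟨hab, ha, hb⟩)
        rcases hq with heq | hmemA
        · rw [Sym2.eq_iff] at heq
          rcases heq with ⟨h1, h2⟩ | ⟨h1, h2⟩
          · injection h1 with e1 e2
            injection h2 with e3 e4
            rw [e1, e2, e3, e4, hc'A v hv, hc'w, hr2, sw_sw]
          · injection h1 with e1 e2
            injection h2 with e3 e4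
            rw [e1, e2, e3, e4, hc'w, hc'A v hv]
            exact hr2
        · have hmm := (memE A a b ia jb).mp hmemA
          rw [hc'A a hmm.2.1, hc'A b hmm.2.2]
          exact hcprop a b ia jb hab hmm.2.1 hmm.2.2
  have hcV : 1 ≤ Fintype.card V := Fintype.card_pos
  obtain ⟨A, c, hAcard, -, hcpos, hcprop⟩ := main (Fintype.card V - 1) (by omega)
  have hAu : A = Finset.univ := Finset.eq_univ_of_card A (by omega)
  subst hAu
  exact ⟨c, hcpos, fun v w i j h =>
    hcprop v w i j h (Finset.mem_univ v) (Finset.mem_univ w)⟩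

lemma delta_sum (c : Fin 9) (t : Fin 10) :
    ∑ r, (if r = c then (1:ℤ) else 0) * cbGens r t = cbGens c t := by
  rw [Finset.sum_eq_single c]
  · simp
  · intro b _ hb; simp [hb]
  · intro h; exact absurd (Finset.mem_univ c) h


/-- Tree gluing: let `V` be a nonempty finite set and `P` a set of unordered pairs of
distinct half-edges (each half-edge in at most one pair, no pair joining a vertex to
itself) whose associated graph on `V` is a tree (connected with `|P| = |V| − 1`).
Every element `f` of the fiber-product monoid `M` (functions `V → ℤ¹⁰` landing in
`C ∩ ℤ¹⁰`, with all levels equal, matching dually along the pairs of `P`) is a sum of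
`L(f)` elements of `M` of common level `1`. -/
theorem stmt_13 (V : Type) [Fintype V] [Nonempty V]
    (P : Finset (Sym2 (V × Fin 3)))
    (hndiag : ∀ p ∈ P, ¬ p.IsDiag)
    (hnoloop : ∀ (v w : V) (i j : Fin 3), s((v, i), (w, j)) ∈ P → v ≠ w)
    (hdisj : ∀ p ∈ P, ∀ q ∈ P, ∀ h : V × Fin 3, h ∈ p → h ∈ q → p = q)
    (hconn : (SimpleGraph.fromRel
      (fun v w => ∃ i j : Fin 3, s((v, i), (w, j)) ∈ P)).Connected)
    (hcard : P.card = Fintype.card V - 1)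
    (f : V → Fin 10 → ℤ)
    (hf1 : ∀ v, (fun t => (f v t : ℝ)) ∈ coneC)
    (hf2 : ∀ v w, f v 9 = f w 9)
    (hf3 : ∀ (v w : V) (i j : Fin 3),
      s((v, i), (w, j)) ∈ P → bd10 (f v) i = sw (bd10 (f w) j)) :
    ∃ (k : ℕ) (g : Fin k → V → Fin 10 → ℤ),
      (∀ s : Fin k,
        (∀ v, (fun t => (g s v t : ℝ)) ∈ coneC) ∧
        (∀ v w, g s v 9 = g s w 9) ∧
        (∀ (v w : V) (i j : Fin 3),
          s((v, i), (w, j)) ∈ P → bd10 (g s v) i = sw (bd10 (g s w) j)) ∧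
        (∀ v, g s v 9 = 1)) ∧
      f = ∑ s : Fin k, g s ∧ (∀ v, (k : ℤ) = f v 9) := by
  classical
  obtain ⟨v₀⟩ := ‹Nonempty V›
  suffices H : ∀ (k : ℕ) (f : V → Fin 10 → ℤ),
      (∀ v, (fun t => (f v t : ℝ)) ∈ coneC) →
      (∀ (v w : V) (i j : Fin 3),
        s((v, i), (w, j)) ∈ P → bd10 (f v) i = sw (bd10 (f w) j)) →
      (∀ v, f v 9 = (k:ℤ)) →
      ∃ (g : Fin k → V → Fin 10 → ℤ),
        (∀ s : Fin k,
          (∀ v, (fun t => (g s v t : ℝ)) ∈ coneC) ∧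
          (∀ v w, g s v 9 = g s w 9) ∧
          (∀ (v w : V) (i j : Fin 3),
            s((v, i), (w, j)) ∈ P → bd10 (g s v) i = sw (bd10 (g s w) j)) ∧
          (∀ v, g s v 9 = 1)) ∧
        f = ∑ s : Fin k, g s by
    have hnn : 0 ≤ f v₀ 9 := by
      obtain ⟨n, hn1, hn2⟩ := int_decomp (f v₀) (hf1 v₀)
      have h := hn2 9
      have e : ∑ r, n r * cbGens r 9 = ∑ r, n r :=
        Finset.sum_congr rfl (fun r _ => by rw [cbGens_level r, mul_one])
      rw [e] at h
      rw [h]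
      exact Finset.sum_nonneg (fun r _ => hn1 r)
    set k := (f v₀ 9).toNat with hkdef
    have hk : ∀ v, f v 9 = (k:ℤ) := fun v => by
      rw [hf2 v v₀, hkdef, Int.toNat_of_nonneg hnn]
    obtain ⟨g, hg, hsum⟩ := H k f hf1 hf3 hk
    exact ⟨k, g, hg, hsum, fun v => (hk v).symm⟩
  intro k
  induction k with
  | zero =>
    intro f h1 h3 h9
    refine ⟨fun s => s.elim0, fun s => s.elim0, ?_⟩
    funext v t
    obtain ⟨n, hn1, hn2⟩ := int_decomp (f v) (h1 v)
    have h := hn2 9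
    have e : ∑ r, n r * cbGens r 9 = ∑ r, n r :=
      Finset.sum_congr rfl (fun r _ => by rw [cbGens_level r, mul_one])
    rw [e, h9 v] at h
    have hz : ∀ r ∈ Finset.univ, n r = 0 := by
      intro r _
      have hle := Finset.single_le_sum (f := n) (fun r _ => hn1 r) (Finset.mem_univ r)
      have := hn1 r
      omega
    have : f v t = 0 := by
      rw [hn2 t, Finset.sum_eq_zero]
      intro r hr
      rw [hz r hr, zero_mul]
    rw [this]
    simp
  | succ k ih =>
    intro f h1 h3 h9
    have hd : ∀ v, ∃ n : Fin 9 → ℤ, (∀ r, 0 ≤ n r) ∧ ∀ t, f v t = ∑ r, n r * cbGens r t :=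
      fun v => int_decomp (f v) (h1 v)
    choose N hN1 hN2 using hd
    have hNsum : ∀ v, ∑ r, N v r = (k:ℤ) + 1 := by
      intro v
      have h := hN2 v 9
      have e : ∑ r, N v r * cbGens r 9 = ∑ r, N v r :=
        Finset.sum_congr rfl (fun r _ => by rw [cbGens_level r, mul_one])
      rw [e] at h
      rw [← h, h9 v]
      push_cast
      ring
    have hL : ∀ v w, ∑ r, N v r = ∑ r, N w r := fun v w => by rw [hNsum v, hNsum w]
    have hL1 : ∀ v, 1 ≤ ∑ r, N v r := fun v => by
      rw [hNsum v]
      have : (0:ℤ) ≤ (k:ℤ) := Int.natCast_nonneg k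
      omega
    obtain ⟨c, hcpos, hcprop⟩ := select V P hnoloop hconn hcard N hN1 hL hL1 f hN2 h3
    set f' : V → Fin 10 → ℤ := fun v t => f v t - cbGens (c v) t with hf'
    set N' : V → Fin 9 → ℤ := fun v r => N v r - if r = c v then 1 else 0 with hN'
    have hN'x : ∀ v t, f' v t = ∑ r, N' v r * cbGens r t := by
      intro v t
      have e : ∑ r, N' v r * cbGens r t
          = (∑ r, N v r * cbGens r t) - ∑ r, (if r = c v then (1:ℤ) else 0) * cbGens r t := by
        rw [← Finset.sum_sub_distrib]
        apply Finset.sum_congr rfl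
        intro r _
        rw [hN']
        ring
      rw [e, ← hN2 v t, delta_sum]
    have hN'1 : ∀ v r, 0 ≤ N' v r := by
      intro v r
      rw [hN']
      by_cases h : r = c v
      · subst h
        simp only [if_pos rfl]
        have := hcpos v
        omega
      · simp only [if_neg h, sub_zero]
        exact hN1 v r
    have h1' : ∀ v, (fun t => (f' v t : ℝ)) ∈ coneC :=
      fun v => mem_coneC_of_int _ (N' v) (hN'1 v) (hN'x v)
    have hbd0 : ∀ v i, bd10 (f' v) i = bd10 (f v) i - bdg i (c v) :=
      fun v i => bd10_sub (f v) (cbGens (c v)) i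
    have h3' : ∀ (v w : V) (i j : Fin 3),
        s((v, i), (w, j)) ∈ P → bd10 (f' v) i = sw (bd10 (f' w) j) := by
      intro v w i j hp
      rw [hbd0 v i, hbd0 w j, h3 v w i j hp, hcprop v w i j hp, sw_sub]
    have h9' : ∀ v, f' v 9 = (k:ℤ) := by
      intro v
      show f v 9 - cbGens (c v) 9 = (k:ℤ)
      rw [cbGens_level (c v), h9 v]
      push_cast
      ring
    obtain ⟨g', hg', hsum'⟩ := ih f' h1' h3' h9'
    set g0 : V → Fin 10 → ℤ := fun v => cbGens (c v) with hg0
    refine ⟨Fin.cons g0 g', ?_, ?_⟩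
    · intro s
      induction s using Fin.cases with
      | zero =>
        simp only [Fin.cons_zero]
        refine ⟨?_, ?_, ?_, ?_⟩
        · intro v
          apply mem_coneC_of_int _ (fun r => if r = c v then 1 else 0)
          · intro r
            by_cases h : r = c v <;> simp [h]
          · intro t
            rw [hg0, delta_sum]
        · intro v w
          rw [hg0]
          show cbGens (c v) 9 = cbGens (c w) 9
          rw [cbGens_level, cbGens_level]
        · intro v w i j hp
          exact hcprop v w i j hp
        · intro v
          exact cbGens_level (c v)
      | succ s' =>
        simp only [Fin.cons_succ]
        exact hg' s'
    · rw [Fin.sum_cons, ← hsum']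
      funext v t
      show f v t = g0 v t + f' v t
      rw [hg0, hf']
      ring
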